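/- For the maximum expected density of arrival points of a point process with inter-arrival times X_1,...,X_n (marginals F_k) on a measurable union of inter-arrival intervals of total length s, one has d_max(s) = E[N(n,s)]/s ≤ (1/s)·Σ_{k=1}^n F_k(t(n,s)), with t(n,s) solving the BRS-equation. -/

import Mathlib

open MeasureTheory ProbabilityTheory Finset Set
open scoped Classical

/-- Maximum expected density of points of a point process with inter-arrival
times `X 1, …, X n` (marginals `F k`) on a union of inter-arrival intervals of
total length `s`: `d_max(s) = E[N(n,s)]/s ≤ (1/s)·∑ k, F k (t(n,s))`, with
`t(n,s)` solving the BRS-equation. -/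
theorem brs_point_process_density
    {Ω : Type*} [MeasureSpace Ω] [IsProbabilityMeasure (ℙ : Measure Ω)]
    (n : ℕ) (s t : ℝ) (hs : 0 < s) (ht : 0 < t)
    (X : Fin n → Ω → ℝ) (hXmeas : ∀ k, Measurable (X k))
    (hXpos : ∀ k ω, 0 < X k ω)
    (hsT : ∀ ω, s < ∑ k : Fin n, X k ω)
    (F : Fin n → ℝ → ℝ)
    (hF : ∀ k x, F k x = ((Measure.map (X k) ℙ) (Iic x)).toReal)
    (hBRS : ∑ k : Fin n, ∫ x in Ioc (0:ℝ) t, x ∂(Measure.map (X k) ℙ) = s)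
    (N : Ω → ℕ)
    (hN : ∀ ω, N ω = ((Finset.univ.powerset.filter
      (fun A : Finset (Fin n) => ∑ i ∈ A, X i ω ≤ s)).sup Finset.card)) :
    (∫ ω, (N ω : ℝ)) / s ≤ (1 / s) * ∑ k : Fin n, F k t := by
  have hSmeas : ∀ k : Fin n, MeasurableSet {ω | X k ω ≤ t} :=
    fun k => (hXmeas k) measurableSet_Iic
  -- pointwise key inequality
  have key : ∀ ω, (N ω : ℝ) ≤ s / t + ∑ k : Fin n,
      (if X k ω ≤ t then 1 - X k ω / t else 0) := by
    intro ω
    set C : Finset (Fin n) := Finset.univ.filter (fun k => X k ω ≤ t) with hCdef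
    have hne : (Finset.univ.powerset.filter
        (fun A : Finset (Fin n) => ∑ i ∈ A, X i ω ≤ s)).Nonempty :=
      ⟨∅, by simp [hs.le]⟩
    obtain ⟨A, hA, hAcard⟩ := Finset.exists_mem_eq_sup _ hne Finset.card
    rw [Finset.mem_filter] at hA
    have hAs : ∑ i ∈ A, X i ω ≤ s := hA.2
    have hNA : (N ω : ℝ) = A.card := by rw [hN ω, hAcard]
    have hsum : ∑ k : Fin n, (if X k ω ≤ t then 1 - X k ω / t else 0)
        = (C.card : ℝ) - (∑ k ∈ C, X k ω) / t := by
      rw [← Finset.sum_filter, ← hCdef, Finset.sum_sub_distrib, Finset.sum_const,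
        Finset.sum_div]
      simp
    have h1 : ∑ k ∈ A ∩ C, X k ω + ∑ k ∈ A \ C, X k ω = ∑ k ∈ A, X k ω :=
      Finset.sum_inter_add_sum_sdiff A C _
    have h2 : ∑ k ∈ C ∩ A, X k ω + ∑ k ∈ C \ A, X k ω = ∑ k ∈ C, X k ω :=
      Finset.sum_inter_add_sum_sdiff C A _
    have hCA : C ∩ A = A ∩ C := Finset.inter_comm C A
    have h3 : ∑ k ∈ C \ A, X k ω ≤ ((C \ A).card : ℝ) * t := by
      have := Finset.sum_le_card_nsmul (C \ A) (fun k => X k ω) t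
        (fun k hk => by
          have hkC : k ∈ C := (Finset.mem_sdiff.1 hk).1
          exact (Finset.mem_filter.1 hkC).2)
      simpa [nsmul_eq_mul] using this
    have h4 : ((A \ C).card : ℝ) * t ≤ ∑ k ∈ A \ C, X k ω := by
      have := Finset.card_nsmul_le_sum (A \ C) (fun k => X k ω) t
        (fun k hk => by
          have hkC : k ∉ C := (Finset.mem_sdiff.1 hk).2
          have : ¬ X k ω ≤ t := by
            intro h; exact hkC (Finset.mem_filter.2 ⟨Finset.mem_univ _, h⟩)
          linarith [lt_of_not_ge this])
      simpa [nsmul_eq_mul] using this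
    have hcardA : ((A ∩ C).card : ℝ) + ((A \ C).card : ℝ) = (A.card : ℝ) := by
      have := Finset.card_inter_add_card_sdiff A C
      exact_mod_cast this
    have hcardC : ((C ∩ A).card : ℝ) + ((C \ A).card : ℝ) = (C.card : ℝ) := by
      have := Finset.card_inter_add_card_sdiff C A
      exact_mod_cast this
    rw [hCA] at h2 hcardC
    have main : (A.card : ℝ) * t ≤ (C.card : ℝ) * t + s - ∑ k ∈ C, X k ω := by
      nlinarith [h1, h2, h3, h4, hcardA, hcardC]
    have hrhs : s / t + ((C.card : ℝ) - (∑ k ∈ C, X k ω) / t)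
        = ((C.card : ℝ) * t + s - ∑ k ∈ C, X k ω) / t := by
      field_simp; ring
    rw [hNA, hsum, hrhs]
    exact (le_div_iff₀ ht).2 main
  -- integrability
  have hgk_meas : ∀ k : Fin n,
      Measurable (fun ω => if X k ω ≤ t then 1 - X k ω / t else 0) := by
    intro k
    exact Measurable.ite (hSmeas k) (by fun_prop) measurable_const
  have hgk_int : ∀ k : Fin n,
      Integrable (fun ω => if X k ω ≤ t then 1 - X k ω / t else 0) ℙ := by
    intro k
    refine (integrable_const (1:ℝ)).mono' (hgk_meas k).aestronglyMeasurable ?_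
    filter_upwards with ω
    by_cases h : X k ω ≤ t
    · have h1 : X k ω / t ≤ 1 := (div_le_one ht).2 h
      have h2 : 0 ≤ X k ω / t := div_nonneg (hXpos k ω).le ht.le
      simp only [h, if_true]
      rw [Real.norm_eq_abs, abs_le]; constructor <;> linarith
    · simp [h]
  have i1 : ∀ k : Fin n, Integrable (fun ω => if X k ω ≤ t then (1:ℝ) else 0) ℙ := by
    intro k
    have : (fun ω => if X k ω ≤ t then (1:ℝ) else 0)
        = Set.indicator {ω | X k ω ≤ t} (fun _ => (1:ℝ)) := by
      ext ω; simp [Set.indicator_apply, Set.mem_setOf_eq]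
    rw [this]
    exact (integrable_const (1:ℝ)).indicator (hSmeas k)
  have i2 : ∀ k : Fin n, Integrable (fun ω => if X k ω ≤ t then X k ω else 0) ℙ := by
    intro k
    have hm : Measurable (fun ω => if X k ω ≤ t then X k ω else 0) :=
      Measurable.ite (hSmeas k) (hXmeas k) measurable_const
    refine (integrable_const t).mono' hm.aestronglyMeasurable ?_
    filter_upwards with ω
    by_cases h : X k ω ≤ t
    · simp only [h, if_true]
      rw [Real.norm_eq_abs, abs_of_pos (hXpos k ω)]; exact h
    · simp [h, ht.le]
  have hind1 : ∀ k : Fin n, ∫ ω, (if X k ω ≤ t then (1:ℝ) else 0) = F k t := by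
    intro k
    have heq : (fun ω => if X k ω ≤ t then (1:ℝ) else 0)
        = Set.indicator {ω | X k ω ≤ t} (1 : Ω → ℝ) := by
      ext ω; simp [Set.indicator_apply, Set.mem_setOf_eq]
    rw [heq, MeasureTheory.integral_indicator_one (hSmeas k), hF,
      Measure.map_apply (hXmeas k) measurableSet_Iic]
    rfl
  have hind2 : ∀ k : Fin n, ∫ ω, (if X k ω ≤ t then X k ω else 0)
      = ∫ x in Ioc (0:ℝ) t, x ∂(Measure.map (X k) ℙ) := by
    intro k
    have hmap := MeasureTheory.setIntegral_map (μ := ℙ) (g := X k) (f := fun x : ℝ => x) (s := Set.Ioc (0:ℝ) t)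
      measurableSet_Ioc aestronglyMeasurable_id (hXmeas k).aemeasurable
    rw [hmap]
    have hpre : X k ⁻¹' Ioc (0:ℝ) t = {ω | X k ω ≤ t} := by
      ext ω; simp [Set.mem_Ioc, hXpos k ω]
    rw [hpre, ← MeasureTheory.integral_indicator (hSmeas k)]
    congr 1 <;> try (ext ω; simp [Set.indicator_apply, Set.mem_setOf_eq])
  have hgk_eq : ∀ k : Fin n, ∫ ω, (if X k ω ≤ t then 1 - X k ω / t else 0)
      = F k t - (1/t) * ∫ x in Ioc (0:ℝ) t, x ∂(Measure.map (X k) ℙ) := by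
    intro k
    have hfun : (fun ω => if X k ω ≤ t then 1 - X k ω / t else 0)
        = fun ω => (if X k ω ≤ t then (1:ℝ) else 0)
          - (1/t) * (if X k ω ≤ t then X k ω else 0) := by
      ext ω; by_cases h : X k ω ≤ t <;> simp [h] <;> ring
    rw [hfun, MeasureTheory.integral_sub (i1 k) ((i2 k).const_mul _),
      integral_const_mul, hind1, hind2]
  have hgint : Integrable
      (fun ω => s / t + ∑ k : Fin n, (if X k ω ≤ t then 1 - X k ω / t else 0)) ℙ :=
    (integrable_const _).add (integrable_finset_sum _ fun k _ => hgk_int k)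
  have hInt : ∫ ω, (s / t + ∑ k : Fin n, (if X k ω ≤ t then 1 - X k ω / t else 0))
      = ∑ k : Fin n, F k t := by
    rw [MeasureTheory.integral_add (integrable_const _)
        (integrable_finset_sum _ fun k _ => hgk_int k),
      MeasureTheory.integral_const,
      MeasureTheory.integral_finset_sum _ (fun k _ => hgk_int k)]
    simp only [hgk_eq]
    rw [Finset.sum_sub_distrib, ← Finset.mul_sum, hBRS]
    simp [measure_univ]
    field_simp
    ring
  have hmono : ∫ ω, (N ω : ℝ) ≤ ∑ k : Fin n, F k t := by
    calc ∫ ω, (N ω : ℝ)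
        ≤ ∫ ω, (s / t + ∑ k : Fin n, (if X k ω ≤ t then 1 - X k ω / t else 0)) := by
          refine integral_mono_of_nonneg ?_ hgint ?_
          · filter_upwards with ω; exact_mod_cast Nat.cast_nonneg (N ω)
          · filter_upwards with ω; exact key ω
      _ = ∑ k : Fin n, F k t := hInt
  have hs' : (0:ℝ) < 1 / s := by positivity
  calc (∫ ω, (N ω : ℝ)) / s = (1 / s) * ∫ ω, (N ω : ℝ) := by ring
    _ ≤ (1 / s) * ∑ k : Fin n, F k t := mul_le_mul_of_nonneg_left hmono hs'.le
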